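/- Let H ≥ pL_p and let x* be a global minimizer of F = f + h with F* = F(x*). For any x ∈ dom h, if T is a minimizer over E of y ↦ Ω_p(f,x;y) + (H/(p+1)!)‖y−x‖^{p+1} + h(y), then F(T) − F* ≤ ((H+L_p)/(p+1)!)·‖x − x*‖^{p+1}. -/

import Mathlib

open scoped RealInnerProductSpace

open Set Finset in
lemma taylor_remainder_line_bound {E : Type*} [NormedAddCommGroup E] [NormedSpace ℝ E]
    (p : ℕ) (f : E → ℝ) (U : Set E) (hU : IsOpen U)
    (hf : ContDiffOn ℝ (p : ℕ∞) f U)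
    (x y : E) (hseg : segment ℝ x y ⊆ U)
    (L : ℝ) (hL : 0 ≤ L)
    (hLip : ∀ z ∈ segment ℝ x y,
      ‖iteratedFDeriv ℝ p f z - iteratedFDeriv ℝ p f x‖ ≤ L * ‖z - x‖) :
    |f y - ∑ k ∈ Finset.range (p + 1),
        (1 / (Nat.factorial k : ℝ)) * iteratedFDeriv ℝ k f x (fun _ => y - x)|
      ≤ L / (Nat.factorial (p + 1) : ℝ) * ‖y - x‖ ^ (p + 1) := by
  set v := y - x with hv
  set γ : ℝ → E := fun t => x + t • v with hγdef
  have hγmem : ∀ t ∈ Icc (0:ℝ) 1, γ t ∈ segment ℝ x y := by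
    intro t ht
    rw [segment_eq_image']
    exact ⟨t, ht, rfl⟩
  have hγU : ∀ t ∈ Icc (0:ℝ) 1, γ t ∈ U := fun t ht => hseg (hγmem t ht)
  set φ : ℕ → ℝ → ℝ := fun j t => iteratedFDeriv ℝ j f (γ t) (fun _ => v) with hφdef
  -- differentiability of iterated derivatives
  have hdiffAt : ∀ (j : ℕ), j < p → ∀ z ∈ U, DifferentiableAt ℝ (iteratedFDeriv ℝ j f) z := by
    intro j hj z hz
    have h1 : DifferentiableOn ℝ (iteratedFDerivWithin ℝ j f U) U :=
      hf.differentiableOn_iteratedFDerivWithin (by exact_mod_cast hj) hU.uniqueDiffOn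
    have h2 : DifferentiableAt ℝ (iteratedFDerivWithin ℝ j f U) z :=
      (h1 z hz).differentiableAt (hU.mem_nhds hz)
    apply h2.congr_of_eventuallyEq
    filter_upwards [hU.mem_nhds hz] with w hw
    rw [iteratedFDerivWithin_of_isOpen j hU hw]
  have hγd : ∀ t : ℝ, HasDerivAt γ v t := by
    intro t
    have := ((hasDerivAt_id' t).smul_const v).const_add x
    rw [one_smul] at this
    exact this
  -- derivative of φ j is φ (j+1)
  have hφd : ∀ (j : ℕ), j + 1 ≤ p → ∀ t ∈ Icc (0:ℝ) 1, HasDerivAt (φ j) (φ (j + 1) t) t := by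
    intro j hj t ht
    have hz : γ t ∈ U := hγU t ht
    have hd : DifferentiableAt ℝ (iteratedFDeriv ℝ j f) (γ t) :=
      hdiffAt j (by omega) (γ t) hz
    have hc : HasDerivAt (fun s => iteratedFDeriv ℝ j f (γ s))
        (fderiv ℝ (iteratedFDeriv ℝ j f) (γ t) v) t :=
      hd.hasFDerivAt.comp_hasDerivAt t (hγd t)
    have := (ContinuousMultilinearMap.apply ℝ (fun _ : Fin j => E) ℝ
      (fun _ => v)).hasFDerivAt.comp_hasDerivAt t hc
    exact this
  -- the shifted remainders
  set ψ : ℕ → ℝ → ℝ := fun j t =>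
    φ j t - ∑ i ∈ Finset.range (p - j + 1), t ^ i / (Nat.factorial i : ℝ) * φ (j + i) 0
    with hψdef
  have hψd : ∀ (j : ℕ), j + 1 ≤ p → ∀ t ∈ Icc (0:ℝ) 1, HasDerivAt (ψ j) (ψ (j + 1) t) t := by
    intro j hj t ht
    have h1 := hφd j hj t ht
    have h2 : HasDerivAt (fun s => ∑ i ∈ Finset.range (p - j + 1),
        s ^ i / (Nat.factorial i : ℝ) * φ (j + i) 0)
        (∑ i ∈ Finset.range (p - (j + 1) + 1),
          t ^ i / (Nat.factorial i : ℝ) * φ ((j + 1) + i) 0) t := by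
      have hn : p - j = p - (j + 1) + 1 := by omega
      rw [hn]
      have : ∀ s : ℝ, ∑ i ∈ Finset.range (p - (j+1) + 1 + 1),
          s ^ i / (Nat.factorial i : ℝ) * φ (j + i) 0
          = (∑ i ∈ Finset.range (p - (j+1) + 1),
            s ^ (i+1) / (Nat.factorial (i+1) : ℝ) * φ (j + (i+1)) 0) + φ j 0 := by
        intro s
        rw [Finset.sum_range_succ']
        simp
      simp only [this]
      apply HasDerivAt.add_const
      apply HasDerivAt.fun_sum
      intro i _
      have h3 : HasDerivAt (fun s : ℝ => s ^ (i+1)) ((i+1 : ℕ) * t ^ i) t := by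
        simpa using hasDerivAt_pow (i+1) t
      have h4 := (h3.div_const (Nat.factorial (i+1) : ℝ)).mul_const (φ (j + (i+1)) 0)
      refine h4.congr_deriv ?_
      have hidx : j + 1 + i = j + (i + 1) := by omega
      rw [hidx, Nat.factorial_succ]
      have hfi : (Nat.factorial i : ℝ) ≠ 0 := by positivity
      push_cast
      field_simp
    simp only [hψdef]
    exact h1.sub h2
  -- value at 0 is 0
  have hψ0 : ∀ j : ℕ, ψ j 0 = 0 := by
    intro j
    simp only [hψdef]
    rw [Finset.sum_range_succ']
    simp
  -- base bound
  have hbase : ∀ t ∈ Icc (0:ℝ) 1, |ψ p t| ≤ L * ‖v‖ ^ (p + 1) * t := by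
    intro t ht
    have hps : p - p + 1 = 1 := by omega
    have : ψ p t = φ p t - φ p 0 := by
      simp only [hψdef, hps]
      simp
    rw [this]
    have hγ0 : γ 0 = x := by simp [hγdef]
    have hφt : φ p t - φ p 0 =
        (iteratedFDeriv ℝ p f (γ t) - iteratedFDeriv ℝ p f x) (fun _ => v) := by
      simp [hφdef, hγ0]
    rw [hφt]
    have hb := ((iteratedFDeriv ℝ p f (γ t) - iteratedFDeriv ℝ p f x)).le_opNorm
      (fun _ => v)
    have hlip := hLip (γ t) (hγmem t ht)
    have hnorm : ‖γ t - x‖ = t * ‖v‖ := by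
      have : γ t - x = t • v := by simp [hγdef]
      rw [this, norm_smul, Real.norm_eq_abs, abs_of_nonneg ht.1]
    calc |(iteratedFDeriv ℝ p f (γ t) - iteratedFDeriv ℝ p f x) (fun _ => v)|
        ≤ ‖iteratedFDeriv ℝ p f (γ t) - iteratedFDeriv ℝ p f x‖ * ∏ _i : Fin p, ‖v‖ := hb
      _ ≤ (L * ‖γ t - x‖) * ‖v‖ ^ p := by
          rw [Finset.prod_const]
          simp only [Finset.card_univ, Fintype.card_fin]
          exact mul_le_mul_of_nonneg_right hlip (by positivity)
      _ = L * ‖v‖ ^ (p + 1) * t := by rw [hnorm]; ring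
  -- main downward induction
  have key : ∀ n : ℕ, n ≤ p → ∀ t ∈ Icc (0:ℝ) 1,
      |ψ (p - n) t| ≤ L * ‖v‖ ^ (p + 1) * t ^ (n + 1) / (Nat.factorial (n + 1) : ℝ) := by
    intro n
    induction n with
    | zero =>
      intro _ t ht
      simpa using hbase t ht
    | succ n ih =>
      intro hn t ht
      have hj1 : p - (n + 1) + 1 = p - n := by omega
      have hcont : ContinuousOn (ψ (p - (n+1))) (Icc (0:ℝ) 1) := by
        intro s hs
        exact ((hψd (p - (n+1)) (by omega) s hs).continuousAt).continuousWithinAt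
      have hB : ∀ s : ℝ, HasDerivAt
          (fun u => L * ‖v‖ ^ (p + 1) * u ^ (n + 2) / (Nat.factorial (n + 2) : ℝ))
          (L * ‖v‖ ^ (p + 1) * s ^ (n + 1) / (Nat.factorial (n + 1) : ℝ)) s := by
        intro s
        have h3 : HasDerivAt (fun u : ℝ => u ^ (n+2)) ((n+2 : ℕ) * s ^ (n+1)) s := by
          simpa using hasDerivAt_pow (n+2) s
        have h4 := (h3.const_mul (L * ‖v‖ ^ (p + 1))).div_const (Nat.factorial (n+2) : ℝ)
        refine h4.congr_deriv ?_
        rw [Nat.factorial_succ (n+1)]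
        have : (Nat.factorial (n+1) : ℝ) ≠ 0 := by positivity
        push_cast
        field_simp
        ring
      have := image_norm_le_of_norm_deriv_right_le_deriv_boundary hcont
        (fun s hs => (hψd (p - (n+1)) (by omega) s (Ico_subset_Icc_self hs)).hasDerivWithinAt)
        (by rw [hψ0]; simp) hB
        (fun s hs => by
          rw [Real.norm_eq_abs, hj1]
          exact ih (by omega) s (Ico_subset_Icc_self hs)) ht
      simpa using this
  have hfin := key p le_rfl 1 (by norm_num)
  have hψ01 : ψ 0 1 = f y - ∑ k ∈ Finset.range (p + 1),
      (1 / (Nat.factorial k : ℝ)) * iteratedFDeriv ℝ k f x (fun _ => v) := by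
    simp only [hψdef, hφdef]
    have hγ1 : γ 1 = y := by simp [hγdef, hv]
    have hγ0 : γ 0 = x := by simp [hγdef]
    rw [hγ1, hγ0, Nat.sub_zero, iteratedFDeriv_zero_apply]
    congr 1
    apply Finset.sum_congr rfl
    intro k _
    rw [one_pow, Nat.zero_add]
  rw [Nat.sub_self] at hfin
  rw [hψ01] at hfin
  calc |f y - ∑ k ∈ Finset.range (p + 1),
        (1 / (Nat.factorial k : ℝ)) * iteratedFDeriv ℝ k f x (fun _ => v)|
      ≤ L * ‖v‖ ^ (p + 1) * 1 ^ (p + 1) / (Nat.factorial (p + 1) : ℝ) := hfin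
    _ = L / (Nat.factorial (p + 1) : ℝ) * ‖v‖ ^ (p + 1) := by ring

/-- The `p`-th order Taylor polynomial `Ω_p(f,x;y)` of `f` at `x`, evaluated at `y`. -/
noncomputable def OmegaTaylor {E : Type*} [NormedAddCommGroup E] [InnerProductSpace ℝ E]
    (p : ℕ) (f : E → ℝ) (x y : E) : ℝ :=
  ∑ k ∈ Finset.range (p + 1),
    (1 / (Nat.factorial k : ℝ)) * iteratedFDeriv ℝ k f x (fun _ => y - x)

/-- one-step global guarantee of the tensor step. If `H ≥ pL_p`, `x* ` is a
global minimizer of `F = f + h` and `T` is the tensor step from `x ∈ dom h`, then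
`F(T) − F* ≤ ((H+L_p)/(p+1)!) ‖x − x*‖^{p+1}`. -/
theorem rcts_one_step_global_bound
    {E : Type*} [NormedAddCommGroup E] [InnerProductSpace ℝ E] [FiniteDimensional ℝ E]
    (p : ℕ) (hp : 2 ≤ p) (f h F : E → ℝ) (domh U : Set E)
    (hdomcl : IsClosed domh) (hU : IsOpen U) (hUconv : Convex ℝ U) (hsub : domh ⊆ U)
    (hf : ContDiffOn ℝ (p : ℕ∞) f U) (hfconv : ConvexOn ℝ U f)
    (hhconv : ConvexOn ℝ domh h) (hhlsc : LowerSemicontinuousOn h domh)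
    (hF : ∀ z, F z = f z + h z)
    (Lp H : ℝ) (hLp : 0 ≤ Lp) (hH : (p : ℝ) * Lp ≤ H)
    (hLip : ∀ z ∈ domh, ∀ w ∈ domh,
      ‖iteratedFDeriv ℝ p f z - iteratedFDeriv ℝ p f w‖ ≤ Lp * ‖z - w‖)
    (xstar : E) (hxstar : xstar ∈ domh) (hminF : ∀ y ∈ domh, F xstar ≤ F y)
    (Fstar : ℝ) (hFstar : Fstar = F xstar)
    (x : E) (hx : x ∈ domh) (T : E) (hT : T ∈ domh)
    (hmin : ∀ y ∈ domh,
      OmegaTaylor p f x T + H / (Nat.factorial (p + 1) : ℝ) * ‖T - x‖ ^ (p + 1) + h T ≤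
        OmegaTaylor p f x y + H / (Nat.factorial (p + 1) : ℝ) * ‖y - x‖ ^ (p + 1) + h y) :
    F T - Fstar ≤ (H + Lp) / (Nat.factorial (p + 1) : ℝ) * ‖x - xstar‖ ^ (p + 1) := by
  have hconvdom : Convex ℝ domh := hhconv.1
  have hLH : Lp ≤ H := by
    have h2 : (2:ℝ) ≤ (p:ℝ) := by exact_mod_cast hp
    nlinarith
  have hbT := taylor_remainder_line_bound p f U hU hf x T
    (fun z hz => hsub (hconvdom.segment_subset hx hT hz)) Lp hLp
    (fun z hz => hLip z (hconvdom.segment_subset hx hT hz) x hx)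
  have hbS := taylor_remainder_line_bound p f U hU hf x xstar
    (fun z hz => hsub (hconvdom.segment_subset hx hxstar hz)) Lp hLp
    (fun z hz => hLip z (hconvdom.segment_subset hx hxstar hz) x hx)
  have hOT : OmegaTaylor p f x T = ∑ k ∈ Finset.range (p + 1),
      (1 / (Nat.factorial k : ℝ)) * iteratedFDeriv ℝ k f x (fun _ => T - x) := rfl
  have hOS : OmegaTaylor p f x xstar = ∑ k ∈ Finset.range (p + 1),
      (1 / (Nat.factorial k : ℝ)) * iteratedFDeriv ℝ k f x (fun _ => xstar - x) := rfl
  rw [← hOT] at hbT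
  rw [← hOS] at hbS
  have h1 : f T - OmegaTaylor p f x T ≤ Lp / (Nat.factorial (p+1) : ℝ) * ‖T - x‖ ^ (p+1) :=
    le_of_abs_le hbT
  have h2 : OmegaTaylor p f x xstar - f xstar
      ≤ Lp / (Nat.factorial (p+1) : ℝ) * ‖xstar - x‖ ^ (p+1) := by
    have := (abs_le.1 hbS).1
    linarith
  have h3 := hmin xstar hxstar
  have hk : (0:ℝ) < (Nat.factorial (p+1) : ℝ) := by
    exact_mod_cast Nat.factorial_pos (p+1)
  have hc1 : (0:ℝ) ≤ ‖T - x‖ ^ (p+1) := by positivity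
  have hmul : Lp / (Nat.factorial (p+1) : ℝ) * ‖T - x‖ ^ (p+1)
      ≤ H / (Nat.factorial (p+1) : ℝ) * ‖T - x‖ ^ (p+1) := by gcongr
  have hnorm : ‖x - xstar‖ = ‖xstar - x‖ := norm_sub_rev _ _
  rw [hF T, hFstar, hF xstar, hnorm]
  have hsplit : (H + Lp) / (Nat.factorial (p+1) : ℝ) * ‖xstar - x‖ ^ (p+1)
      = H / (Nat.factorial (p+1) : ℝ) * ‖xstar - x‖ ^ (p+1)
        + Lp / (Nat.factorial (p+1) : ℝ) * ‖xstar - x‖ ^ (p+1) := by ring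
  linarith
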